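/- Fix an integer p ≥ 1. If (λ_n) is a sequence in 𝒞_p with λ_n ≠ λ for all n and λ_n → λ for some λ ∈ ℂ with λ ≠ 0, then λ ∈ 𝒞_k for some 1 ≤ k ≤ p−1. (The finite accumulation points of the virtual centers of order p are virtual centers of strictly lower order.) -/

import Mathlib

open Complex Filter

/-- The tangent family: `f_λ(z) = λ · tan z`, with Mathlib's total complex tangent. -/
noncomputable def ftan (lam : ℂ) : ℂ → ℂ := fun z => lam * Complex.tan z

/-- `z` is a prepole of `f_λ` of order `p` (for `p ≥ 1`): `cos (f_λ^[p−1] z) = 0`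
and `cos (f_λ^[j] z) ≠ 0` for all `0 ≤ j < p−1`. -/
def IsPrepole (lam : ℂ) (p : ℕ) (z : ℂ) : Prop :=
  Complex.cos ((ftan lam)^[p - 1] z) = 0 ∧
  ∀ j < p - 1, Complex.cos ((ftan lam)^[j] z) ≠ 0

/-- The orbit of `z` under `f_λ` is pole-free up to time `q`. -/
def PoleFree (lam : ℂ) (q : ℕ) (z : ℂ) : Prop :=
  ∀ j < q, Complex.cos ((ftan lam)^[j] z) ≠ 0

/-- The `j`-th iterate of the asymptotic value `iλ`, as a function of the parameter. -/
noncomputable def Fit (j : ℕ) (lam : ℂ) : ℂ := (ftan lam)^[j] (Complex.I * lam)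

lemma Fit_zero (lam : ℂ) : Fit 0 lam = Complex.I * lam := rfl

lemma Fit_succ (j : ℕ) (lam : ℂ) : Fit (j + 1) lam = lam * Complex.tan (Fit j lam) := by
  simp [Fit, Function.iterate_succ_apply', ftan]

lemma Fit_at_zero (j : ℕ) : Fit j 0 = 0 := by
  induction j with
  | zero => simp [Fit_zero]
  | succ n ih => rw [Fit_succ, zero_mul]

/-- The set of parameters whose orbit of `iλ` is pole-free up to time `j`. -/
def Lset (j : ℕ) : Set ℂ := {lam | ∀ i < j, Complex.cos (Fit i lam) ≠ 0}

lemma zero_mem_Lset (j : ℕ) : (0 : ℂ) ∈ Lset j := by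
  intro i _
  rw [Fit_at_zero, Complex.cos_zero]
  exact one_ne_zero

lemma analyticAt_tan {w : ℂ} (h : Complex.cos w ≠ 0) : AnalyticAt ℂ Complex.tan w := by
  have : AnalyticAt ℂ (fun z => Complex.sin z / Complex.cos z) w :=
    (Complex.differentiable_sin.analyticAt w).div (Complex.differentiable_cos.analyticAt w) h
  simpa [funext Complex.tan_eq_sin_div_cos] using this

lemma isolated_countable (S : Set ℂ) (h : ∀ x ∈ S, ∀ᶠ z in nhdsWithin x {x}ᶜ, z ∉ S) :
    S.Countable := by
  have hd : DiscreteTopology S := by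
    refine discreteTopology_subtype_iff.mpr fun x hx => ?_
    have h1 : ∀ᶠ z in nhdsWithin x {x}ᶜ ⊓ Filter.principal S, z ∉ S :=
      Filter.Eventually.filter_mono inf_le_left (h x hx)
    have h2 : ∀ᶠ z in nhdsWithin x {x}ᶜ ⊓ Filter.principal S, z ∈ S :=
      Filter.Eventually.filter_mono inf_le_right (Filter.eventually_principal.mpr fun _ hz => hz)
    have : ∀ᶠ z in nhdsWithin x {x}ᶜ ⊓ Filter.principal S, False :=
      (h1.and h2).mono fun z hz => hz.1 hz.2
    simpa using this
  have : Countable S := by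
    rw [← TopologicalSpace.separableSpace_iff_countable]
    infer_instance
  exact Set.countable_coe_iff.mp this

/-- Main structural lemma: `Fit j` is analytic on the pole-free set `Lset j`, which is
open with countable complement. -/
lemma Lset_good (j : ℕ) :
    AnalyticOnNhd ℂ (Fit j) (Lset j) ∧ IsOpen (Lset j) ∧ (Lset j)ᶜ.Countable := by
  induction j with
  | zero =>
      refine ⟨fun x _ => ?_, ?_, ?_⟩
      · exact (analyticAt_const.mul analyticAt_id : AnalyticAt ℂ (fun z : ℂ => Complex.I * z) x)
      · have : Lset 0 = Set.univ := by
          ext x; simp [Lset]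
        rw [this]; exact isOpen_univ
      · have : Lset 0 = Set.univ := by
          ext x; simp [Lset]
        rw [this]; simp
  | succ n ih =>
      obtain ⟨hA, hO, hC⟩ := ih
      -- the cosine of the n-th iterate, as analytic function on `Lset n`
      set g : ℂ → ℂ := fun lam => Complex.cos (Fit n lam) with hg
      have hgA : AnalyticOnNhd ℂ g (Lset n) := fun x hx =>
        (Complex.differentiable_cos.analyticAt _).comp (hA x hx)
      have hsplit : Lset (n + 1) = {x | x ∈ Lset n ∧ g x ≠ 0} := by
        ext x
        constructor
        · intro hx
          exact ⟨fun i hi => hx i (Nat.lt_succ_of_lt hi), hx n (Nat.lt_succ_self n)⟩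
        · rintro ⟨hx, hgx⟩ i hi
          rcases Nat.lt_succ_iff_lt_or_eq.mp hi with h | h
          · exact hx i h
          · rw [h]; exact hgx
      -- preconnectedness of `Lset n` from countable complement
      have hrank : (1 : Cardinal) < Module.rank ℝ ℂ := by
        rw [Complex.rank_real_complex]; norm_num
      have hconn : IsPreconnected (Lset n) := by
        have := (hC.isPathConnected_compl_of_one_lt_rank hrank).isConnected.isPreconnected
        rwa [compl_compl] at this
      -- `g` is not eventually zero anywhere on `Lset n`
      have hnotz : ∀ x ∈ Lset n, ¬ (g =ᶠ[nhds x] 0) := by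
        intro x hx hev
        have := hgA.eqOn_zero_of_preconnected_of_eventuallyEq_zero hconn hx hev
          (zero_mem_Lset n)
        rw [hg] at this
        simp only [Fit_at_zero, Complex.cos_zero, Pi.zero_apply] at this
        exact one_ne_zero this
      -- openness
      have hopen : IsOpen (Lset (n + 1)) := by
        rw [hsplit]
        rw [isOpen_iff_mem_nhds]
        rintro x ⟨hx, hgx⟩
        have h1 : ∀ᶠ z in nhds x, z ∈ Lset n := hO.mem_nhds hx
        have h2 : ∀ᶠ z in nhds x, g z ≠ 0 :=
          (hgA x hx).continuousAt.eventually_ne hgx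
        exact (h1.and h2).mono fun z hz => hz
      -- countable complement
      have hS : {x | x ∈ Lset n ∧ g x = 0}.Countable := by
        apply isolated_countable
        rintro x ⟨hx, hgx⟩
        rcases (hgA x hx).eventually_eq_zero_or_eventually_ne_zero with h | h
        · exact absurd (h.mono fun z hz => hz) (hnotz x hx)
        · exact h.mono fun z hz hmem => hz hmem.2
      have hcompl : (Lset (n + 1))ᶜ ⊆ (Lset n)ᶜ ∪ {x | x ∈ Lset n ∧ g x = 0} := by
        intro x hx
        rw [hsplit] at hx
        by_cases hxn : x ∈ Lset n
        · right
          refine ⟨hxn, ?_⟩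
          by_contra hne
          exact hx ⟨hxn, hne⟩
        · left; exact hxn
      refine ⟨?_, hopen, (hC.union hS).mono hcompl⟩
      -- analyticity of `Fit (n+1)`
      intro x hx
      rw [hsplit] at hx
      obtain ⟨hxn, hgx⟩ := hx
      have htan : AnalyticAt ℂ Complex.tan (Fit n x) := analyticAt_tan hgx
      have : AnalyticAt ℂ (fun lam => lam * Complex.tan (Fit n lam)) x :=
        analyticAt_id.mul (htan.comp (hA x hxn))
      have hfe : Fit (n + 1) = fun lam => lam * Complex.tan (Fit n lam) :=
        funext fun lam => Fit_succ n lam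
      rw [hfe]
      exact this

/-- Finite accumulation points of the virtual centers of order `p` are virtual
centers of strictly lower order. -/
theorem virtual_center_accumulation (p : ℕ) (hp : 1 ≤ p)
    (lams : ℕ → ℂ) (lam : ℂ) (hlam : lam ≠ 0)
    (hmem : ∀ n, lams n ≠ 0 ∧ IsPrepole (lams n) p (Complex.I * lams n))
    (hne : ∀ n, lams n ≠ lam)
    (hlim : Filter.Tendsto lams Filter.atTop (nhds lam)) :
    ∃ k, 1 ≤ k ∧ k ≤ p - 1 ∧ IsPrepole lam k (Complex.I * lam) := by
  by_cases hex : ∃ i, i < p - 1 ∧ Complex.cos (Fit i lam) = 0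
  · -- `lam` has a pole earlier along its orbit: it is a prepole of lower order
    classical
    obtain ⟨i, hi⟩ := hex
    have hfind := Nat.find_spec ⟨i, hi⟩ (p := fun i => i < p - 1 ∧ Complex.cos (Fit i lam) = 0)
    set i₀ := Nat.find (⟨i, hi⟩ : ∃ i, i < p - 1 ∧ Complex.cos (Fit i lam) = 0) with hi₀
    refine ⟨i₀ + 1, Nat.succ_le_succ (Nat.zero_le _), hfind.1, ?_, ?_⟩
    · simpa [Nat.add_sub_cancel, Fit] using hfind.2
    · intro j hj
      have hj' : j < i₀ := by omega
      have := Nat.find_min (⟨i, hi⟩ : ∃ i, i < p - 1 ∧ Complex.cos (Fit i lam) = 0) hj'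
      push_neg at this
      intro hzero
      exact absurd hzero (this (by omega))
  · -- otherwise `lam ∈ Lset (p-1)` and the identity principle gives a contradiction
    exfalso
    push_neg at hex
    have hlamL : lam ∈ Lset (p - 1) := fun i hi => hex i hi
    obtain ⟨hA, hO, hC⟩ := Lset_good (p - 1)
    set g : ℂ → ℂ := fun mu => Complex.cos (Fit (p - 1) mu) with hg
    have hgA : AnalyticOnNhd ℂ g (Lset (p - 1)) := fun x hx =>
      (Complex.differentiable_cos.analyticAt _).comp (hA x hx)
    have hgz : ∀ n, g (lams n) = 0 := fun n => (hmem n).2.1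
    have htend : Filter.Tendsto lams Filter.atTop (nhdsWithin lam {lam}ᶜ) := by
      apply tendsto_nhdsWithin_of_tendsto_nhds_of_eventually_within _ hlim
      exact Filter.Eventually.of_forall fun n => hne n
    have hfreq : ∃ᶠ z in nhdsWithin lam {lam}ᶜ, g z = 0 :=
      htend.frequently (Filter.Frequently.of_forall fun n => hgz n)
    have hev : ∀ᶠ z in nhds lam, g z = 0 :=
      (hgA lam hlamL).frequently_zero_iff_eventually_zero.mp hfreq
    have hrank : (1 : Cardinal) < Module.rank ℝ ℂ := by
      rw [Complex.rank_real_complex]; norm_num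
    have hconn : IsPreconnected (Lset (p - 1)) := by
      have := (hC.isPathConnected_compl_of_one_lt_rank hrank).isConnected.isPreconnected
      rwa [compl_compl] at this
    have hzero := hgA.eqOn_zero_of_preconnected_of_eventuallyEq_zero hconn hlamL
      (hev.mono fun z hz => hz) (zero_mem_Lset (p - 1))
    rw [hg] at hzero
    simp only [Fit_at_zero, Complex.cos_zero, Pi.zero_apply] at hzero
    exact one_ne_zero hzero
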